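/- Let g : ℝ → ℝ be 2π-periodic and continuously differentiable, with g' Hölder continuous of some exponent a ∈ (0,1]. Then for every x the principal-value limit Λg(x) := (1/(4π))·lim_{ε→0⁺} ∫_{ε<|η|<π} (g(x)−g(x−η))/sin²(η/2) dη exists, the double integral below converges absolutely, and ∫_{−π}^{π} Λg(x)/(1+g(x)²) dx = −(1/(8π)) ∫_{−π}^{π}∫_{−π}^{π} (g(x)−g(y))²·(g(x)+g(y)) / ( sin²((x−y)/2)·(1+g(x)²)·(1+g(y)²) ) dx dy. In particular, if g ≥ 0 then ∫_{−π}^{π} Λg/(1+g²) dx ≤ 0. -/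

import Mathlib

open MeasureTheory Filter Set

/-- The truncated principal-value integral for the periodic fractional Laplacian. -/
noncomputable def pvIntegralT (u : ℝ → ℝ) (x ε : ℝ) : ℝ :=
  (1 / (4 * Real.pi)) *
    ∫ η in {η : ℝ | ε < |η| ∧ |η| < Real.pi}, (u x - u (x - η)) / Real.sin (η / 2) ^ 2

/-- `Λu(x) = L` in the periodic principal-value sense. -/
def HasPVLambdaT (u : ℝ → ℝ) (x L : ℝ) : Prop :=
  Tendsto (fun ε => pvIntegralT u x ε) (nhdsWithin 0 (Set.Ioi 0)) (nhds L)

open Real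

private lemma sq_le_pi_sq_sin_sq {η : ℝ} (hη : |η| ≤ π) :
    η ^ 2 ≤ π ^ 2 * Real.sin (η / 2) ^ 2 := by
  have h0 : Real.sin (η/2) ^ 2 = Real.sin (|η|/2) ^ 2 := by
    rcases abs_cases η with ⟨h1, _⟩ | ⟨h1, _⟩
    · rw [h1]
    · rw [h1, neg_div, Real.sin_neg, neg_sq]
  have hs0 : (0:ℝ) ≤ |η| := abs_nonneg η
  have h3 : 2 / π * (|η|/2) ≤ Real.sin (|η|/2) :=
    Real.mul_le_sin (by positivity) (by linarith)
  have h4 : |η| / π ≤ Real.sin (|η|/2) := by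
    have : 2 / π * (|η|/2) = |η| / π := by ring
    linarith [this ▸ h3]
  have h5 : |η| ≤ π * Real.sin (|η|/2) := by
    rw [div_le_iff₀ Real.pi_pos] at h4; linarith [h4]
  have h6 : |η| ^ 2 ≤ (π * Real.sin (|η|/2)) ^ 2 := by
    have := pow_le_pow_left₀ hs0 h5 2
    exact this
  calc η ^ 2 = |η| ^ 2 := (sq_abs η).symm
    _ ≤ (π * Real.sin (|η|/2)) ^ 2 := h6
    _ = π ^ 2 * Real.sin (|η|/2) ^ 2 := by ring
    _ = π ^ 2 * Real.sin (η/2) ^ 2 := by rw [h0]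

private lemma bdd_of_per {f : ℝ → ℝ} (hf : Continuous f)
    (hp : Function.Periodic f (2 * π)) : ∃ M : ℝ, 0 ≤ M ∧ ∀ x, |f x| ≤ M := by
  obtain ⟨C, hC⟩ := (isCompact_Icc (a := (0:ℝ)) (b := 2*π)).exists_bound_of_continuousOn
    hf.continuousOn
  refine ⟨max C 0, le_max_right _ _, fun x => ?_⟩
  obtain ⟨y, hy, hxy⟩ := hp.exists_mem_Ico₀ (by positivity) x
  rw [hxy]
  exact le_trans (by simpa [Real.norm_eq_abs] using hC y ⟨hy.1, hy.2.le⟩) (le_max_left _ _)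

private lemma per_sub_int (g : ℝ → ℝ) (hper : Function.Periodic g (2*π)) (x : ℝ) (n : ℤ) :
    g (x + n * (2*π)) = g x := by
  have := hper.sub_int_mul_eq (x := x + n * (2*π)) (n := n)
  simpa using this.symm

private lemma comp_key (g : ℝ → ℝ) (L : ℝ)
    (hper : Function.Periodic g (2*π))
    (hLip : ∀ x y : ℝ, |g x - g y| ≤ L * |x - y|) (hL : 0 ≤ L) (x y : ℝ) :
    (g x - g y) ^ 2 ≤ L ^ 2 * π ^ 2 * Real.sin ((x - y) / 2) ^ 2 := by
  have hp : (0:ℝ) < 2*π := by positivity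
  set m := toIocMod hp (-π) (x - y) with hm
  set k := toIocDiv hp (-π) (x - y) with hk
  have hmem : m ∈ Ioc (-π) (-π + 2*π) := toIocMod_mem_Ioc hp _ _
  have hmem' : m ∈ Ioc (-π) π := by
    have : -π + 2*π = π := by ring
    rwa [this] at hmem
  have habs : |m| ≤ π := abs_le.2 ⟨hmem'.1.le, hmem'.2⟩
  have hsub : (x - y) - m = (k:ℝ) * (2*π) := by
    have := self_sub_toIocMod hp (-π) (x - y)
    rw [← hm, ← hk] at this
    simpa [zsmul_eq_mul] using this
  have hgx : g x = g (y + m) := by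
    have : x = (y + m) + (k:ℝ) * (2*π) := by linarith [hsub]
    rw [this, per_sub_int g hper]
  have hsin : Real.sin ((x - y)/2) ^ 2 = Real.sin (m/2) ^ 2 := by
    have hxy2 : (x - y)/2 = m/2 + (k:ℝ) * π := by linarith [hsub]
    rw [hxy2, Real.sin_add_int_mul_pi]
    have hone : ((-1:ℝ)^k)^2 = 1 := by
      rcases Int.even_or_odd k with h | h
      · rw [h.neg_one_zpow]; norm_num
      · rw [Odd.neg_one_zpow h]; norm_num
    rw [mul_pow, hone, one_mul]
  have h1 : |g x - g y| ≤ L * |m| := by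
    rw [hgx]
    calc |g (y + m) - g y| ≤ L * |y + m - y| := hLip _ _
      _ = L * |m| := by ring_nf
  have h2 : (g x - g y) ^ 2 ≤ L ^ 2 * m ^ 2 := by
    calc (g x - g y) ^ 2 = |g x - g y| ^ 2 := (sq_abs _).symm
      _ ≤ (L * |m|) ^ 2 := pow_le_pow_left₀ (abs_nonneg _) h1 2
      _ = L ^ 2 * m ^ 2 := by rw [mul_pow, sq_abs]
  calc (g x - g y) ^ 2 ≤ L ^ 2 * m ^ 2 := h2
    _ ≤ L ^ 2 * (π ^ 2 * Real.sin (m/2) ^ 2) := by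
        exact mul_le_mul_of_nonneg_left (sq_le_pi_sq_sin_sq (η := m) habs) (sq_nonneg L)
    _ = L ^ 2 * π ^ 2 * Real.sin ((x - y)/2) ^ 2 := by rw [hsin]; ring
section
variable (g : ℝ → ℝ) (a K : ℝ)

private lemma hDb_lemma (ha : 0 < a) (ha1 : a ≤ 1) (hK : 0 ≤ K)
    (hg : ContDiff ℝ 1 g)
    (hhold : ∀ x y : ℝ, |deriv g x - deriv g y| ≤ K * |x - y| ^ a) (x η : ℝ) :
    |2 * g x - g (x - η) - g (x + η)| ≤ 2 * K * (|η| ^ a * |η|) := by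
  have hdg : ∀ y : ℝ, HasDerivAt g (deriv g y) y :=
    fun y => ((hg.differentiable one_ne_zero) y).hasDerivAt
  -- reduce to η = s := |η| ≥ 0
  suffices H : ∀ s : ℝ, 0 ≤ s → |2 * g x - g (x - s) - g (x + s)| ≤ 2 * K * (s ^ a * s) by
    rcases abs_cases η with ⟨h1, _⟩ | ⟨h1, h2⟩
    · rw [h1]; exact H η (by linarith)
    · have := H (-η) (by linarith)
      rw [h1]
      calc |2 * g x - g (x - η) - g (x + η)|
          = |2 * g x - g (x - (-η)) - g (x + (-η))| := by
            rw [sub_neg_eq_add, ← sub_eq_add_neg]; ring_nf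
        _ ≤ 2 * K * ((-η) ^ a * (-η)) := this
  intro s hs
  set ψ : ℝ → ℝ := fun t => g (x + t) + g (x - t) with hψ
  have hψd : ∀ t : ℝ, HasDerivAt ψ (deriv g (x + t) - deriv g (x - t)) t := by
    intro t
    have h1 : HasDerivAt (fun t : ℝ => g (x + t)) (deriv g (x + t) * 1) t :=
      (hdg (x + t)).comp t (by simpa using (hasDerivAt_id t).const_add x)
    have h2 : HasDerivAt (fun t : ℝ => g (x - t)) (deriv g (x - t) * (-1)) t :=
      (hdg (x - t)).comp t (by simpa using (hasDerivAt_id t).const_sub x)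
    have h3 : HasDerivAt (fun t : ℝ => g (x + t) + g (x - t))
        (deriv g (x + t) * 1 + deriv g (x - t) * (-1)) t := h1.add h2
    convert h3 using 1
    ring
  have hbound : ∀ t ∈ Icc (0:ℝ) s, ‖deriv g (x + t) - deriv g (x - t)‖ ≤ 2 * K * s ^ a := by
    intro t ht
    have h1 : |deriv g (x + t) - deriv g (x - t)| ≤ K * |2 * t| ^ a := by
      have := hhold (x + t) (x - t)
      simpa [show x + t - (x - t) = 2 * t by ring] using this
    have h2 : |2 * t| ^ a ≤ 2 * s ^ a := by
      rw [abs_of_nonneg (by linarith [ht.1] : (0:ℝ) ≤ 2 * t),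
        Real.mul_rpow (by norm_num) ht.1]
      have e1 : (2:ℝ) ^ a ≤ 2 := by
        calc (2:ℝ) ^ a ≤ 2 ^ (1:ℝ) := Real.rpow_le_rpow_of_exponent_le (by norm_num) ha1
          _ = 2 := Real.rpow_one 2
      have e2 : t ^ a ≤ s ^ a := Real.rpow_le_rpow ht.1 ht.2 ha.le
      have e3 : (0:ℝ) ≤ t ^ a := Real.rpow_nonneg ht.1 a
      nlinarith [Real.rpow_nonneg (show (0:ℝ) ≤ 2 by norm_num) a]
    calc ‖deriv g (x + t) - deriv g (x - t)‖ ≤ K * |2 * t| ^ a := h1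
      _ ≤ K * (2 * s ^ a) := by nlinarith
      _ = 2 * K * s ^ a := by ring
  have hmv := Convex.norm_image_sub_le_of_norm_hasDerivWithin_le
    (f := ψ) (f' := fun t => deriv g (x + t) - deriv g (x - t)) (s := Icc (0:ℝ) s)
    (fun t _ => (hψd t).hasDerivWithinAt) hbound (convex_Icc _ _)
    (left_mem_Icc.2 hs) (right_mem_Icc.2 hs)
  have hψ0 : ψ 0 = 2 * g x := by simp [hψ]; ring
  have : ‖ψ s - ψ 0‖ = |2 * g x - g (x - s) - g (x + s)| := by
    rw [hψ0, Real.norm_eq_abs, ← abs_neg]; congr 1; simp [hψ]; ring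
  rw [this] at hmv
  calc |2 * g x - g (x - s) - g (x + s)| ≤ 2 * K * s ^ a * ‖s - 0‖ := hmv
    _ = 2 * K * (s ^ a * s) := by rw [sub_zero, Real.norm_eq_abs, abs_of_nonneg hs]; ring

end
section
variable (g : ℝ → ℝ) (a K L M : ℝ)

-- W bound
private lemma hWb_lemma (ha : 0 < a) (hK : 0 ≤ K)
    (hDb : ∀ x η : ℝ, |2 * g x - g (x - η) - g (x + η)| ≤ 2 * K * (|η| ^ a * |η|))
    (x η : ℝ) (hη : |η| ≤ π) :
    |(2 * g x - g (x - η) - g (x + η)) / Real.sin (η / 2) ^ 2|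
      ≤ 2 * K * π ^ 2 * |η| ^ (a - 1) := by
  rcases eq_or_ne η 0 with rfl | hne
  · simp
    positivity
  · have habs : 0 < |η| := abs_pos.2 hne
    have hsinsq : 0 < Real.sin (η / 2) ^ 2 := by
      have h1 := sq_le_pi_sq_sin_sq hη
      have h2 : 0 < η ^ 2 := by positivity
      nlinarith [sq_nonneg (Real.sin (η / 2)), Real.pi_pos, sq_nonneg π]
    rw [abs_div, abs_of_nonneg hsinsq.le, div_le_iff₀ hsinsq]
    have hBA : |η| ^ (a - 1) * |η| = |η| ^ a := by
      rw [← Real.rpow_add_one (ne_of_gt habs) (a - 1)]; ring_nf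
    have hB0 : (0:ℝ) ≤ |η| ^ (a - 1) := Real.rpow_nonneg habs.le _
    have hA0 : (0:ℝ) ≤ |η| ^ a := Real.rpow_nonneg habs.le _
    have hkey := sq_le_pi_sq_sin_sq hη
    calc |2 * g x - g (x - η) - g (x + η)| ≤ 2 * K * (|η| ^ a * |η|) := hDb x η
      _ = 2 * K * (|η| ^ (a - 1) * (|η| * |η|)) := by rw [← hBA]; ring
      _ = 2 * K * (|η| ^ (a - 1) * η ^ 2) := by rw [← sq_abs η]; ring
      _ ≤ 2 * K * (|η| ^ (a - 1) * (π ^ 2 * Real.sin (η / 2) ^ 2)) := by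
          nlinarith [mul_le_mul_of_nonneg_left hkey hB0]
      _ = 2 * K * π ^ 2 * |η| ^ (a - 1) * Real.sin (η / 2) ^ 2 := by ring

-- Q bound
private lemma hQb_lemma (hper : Function.Periodic g (2*π)) (hL : 0 ≤ L) (hM : 0 ≤ M)
    (hMb : ∀ x, |g x| ≤ M)
    (hcomp : ∀ x y : ℝ, (g x - g y) ^ 2 ≤ L ^ 2 * π ^ 2 * Real.sin ((x - y) / 2) ^ 2)
    (x y : ℝ) :
    |(g x - g y) ^ 2 * (g x + g y) /
        (Real.sin ((x - y) / 2) ^ 2 * (1 + g x ^ 2) * (1 + g y ^ 2))|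
      ≤ L ^ 2 * π ^ 2 * (2 * M) := by
  rcases eq_or_ne (Real.sin ((x - y) / 2)) 0 with hsin | hsin
  · obtain ⟨n, hn⟩ := Real.sin_eq_zero_iff.1 hsin
    have hxy : g x = g y := by
      have hx : x = y + (n:ℝ) * (2 * π) := by linarith [hn]
      rw [hx]
      have := hper.sub_int_mul_eq (x := y + (n:ℝ) * (2*π)) (n := n)
      simpa using this.symm
    rw [hxy, sub_self]
    simp
    positivity
  · have hs2 : 0 < Real.sin ((x - y) / 2) ^ 2 :=
      lt_of_le_of_ne (sq_nonneg _) (Ne.symm (pow_ne_zero 2 hsin))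
    have hden : 0 < Real.sin ((x - y) / 2) ^ 2 * (1 + g x ^ 2) * (1 + g y ^ 2) := by
      positivity
    rw [abs_div, abs_of_nonneg hden.le, div_le_iff₀ hden]
    have h1 : |(g x - g y) ^ 2 * (g x + g y)| ≤ (g x - g y) ^ 2 * (2 * M) := by
      rw [abs_mul, abs_of_nonneg (sq_nonneg _)]
      have : |g x + g y| ≤ 2 * M := by
        calc |g x + g y| ≤ |g x| + |g y| := abs_add_le _ _
          _ ≤ 2 * M := by linarith [hMb x, hMb y]
      nlinarith [sq_nonneg (g x - g y), abs_nonneg (g x + g y)]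
    calc |(g x - g y) ^ 2 * (g x + g y)| ≤ (g x - g y) ^ 2 * (2 * M) := h1
      _ ≤ (L ^ 2 * π ^ 2 * Real.sin ((x - y) / 2) ^ 2) * (2 * M) := by
          nlinarith [hcomp x y]
      _ ≤ L ^ 2 * π ^ 2 * (2 * M) *
            (Real.sin ((x - y) / 2) ^ 2 * (1 + g x ^ 2) * (1 + g y ^ 2)) := by
          nlinarith [sq_nonneg (g x), sq_nonneg (g y), sq_nonneg (g x * g y),
            mul_nonneg (mul_nonneg (mul_nonneg (sq_nonneg L) (sq_nonneg π)) hM) hs2.le]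

end
private lemma setIntegral_neg_symm {f : ℝ → ℝ} {s : Set ℝ}
    (hs : ∀ x : ℝ, x ∈ s ↔ -x ∈ s) : ∫ x in s, f (-x) = ∫ x in s, f x := by
  have A : MeasurableEmbedding fun x : ℝ => -x :=
    (Homeomorph.neg ℝ).isClosedEmbedding.measurableEmbedding
  have h := A.setIntegral_map (μ := volume) f s
  rw [Measure.map_neg_eq_self (volume : Measure ℝ)] at h
  have hpre : (fun x : ℝ => -x) ⁻¹' s = s := by
    ext x; simp [Set.mem_preimage, ← hs x]
  rw [hpre] at h
  exact h.symm

private lemma integrableOn_of_bdd {f : ℝ → ℝ} {s : Set ℝ} (hs : MeasurableSet s)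
    (hm : Measurable f) (hμ : volume s < ⊤) {C : ℝ} (hC : ∀ η ∈ s, |f η| ≤ C) :
    IntegrableOn f s := by
  refine Integrable.mono' (g := fun _ => C) (integrableOn_const hμ.ne)
    hm.aestronglyMeasurable ?_
  rw [ae_restrict_iff' hs]
  exact Eventually.of_forall fun η hη => by simpa [Real.norm_eq_abs] using hC η hη

private lemma integrableOn_abs_rpow {r : ℝ} (hr : -1 < r) :
    IntegrableOn (fun η : ℝ => |η| ^ r) (Ioo (-π) π) := by
  have h2 : IntegrableOn (fun η : ℝ => |η| ^ r) (Ioo 0 π) := by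
    refine ((intervalIntegral.integrableOn_Ioo_rpow_iff Real.pi_pos).2 hr).congr_fun ?_ measurableSet_Ioo
    exact fun η hη => by rw [abs_of_pos hη.1]
  have h3 : IntegrableOn (fun η : ℝ => |η| ^ r) (Ioo (-π) 0) := by
    have A : MeasurableEmbedding fun x : ℝ => -x :=
      (Homeomorph.neg ℝ).isClosedEmbedding.measurableEmbedding
    rw [IntegrableOn, ← Measure.map_neg_eq_self (volume : Measure ℝ),
      A.restrict_map, A.integrable_map_iff]
    have hpre : (fun x : ℝ => -x) ⁻¹' Ioo (-π) 0 = Ioo 0 π := by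
      ext x
      simp only [Set.mem_preimage, Set.mem_Ioo]
      constructor <;> intro h <;> constructor <;> linarith [h.1, h.2]
    rw [hpre]
    simpa [Function.comp_def, abs_neg, IntegrableOn] using h2
  have h4 : IntegrableOn (fun η : ℝ => |η| ^ r) (Ioc (-π) 0) := by
    rw [IntegrableOn, Measure.restrict_congr_set Ioo_ae_eq_Ioc.symm]
    exact h3
  have : Ioc (-π) 0 ∪ Ioo 0 π = Ioo (-π) π :=
    Ioc_union_Ioo_eq_Ioo (by linarith [Real.pi_pos]) Real.pi_pos
  rw [← this]
  exact h4.union h2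

section
variable (g : ℝ → ℝ) (a K : ℝ)

private lemma pv_lemma (hgc : Continuous g) (hK : 0 ≤ K) {M : ℝ} (hM : 0 ≤ M) (hMb : ∀ x, |g x| ≤ M)
    (hWb : ∀ x η : ℝ, |η| ≤ π →
      |(2 * g x - g (x - η) - g (x + η)) / Real.sin (η / 2) ^ 2|
        ≤ 2 * K * π ^ 2 * |η| ^ (a - 1))
    (hbint : IntegrableOn (fun η : ℝ => 2 * K * π ^ 2 * |η| ^ (a - 1)) (Ioo (-π) π))
    (x : ℝ) :
    HasPVLambdaT g x ((1 / (8 * π)) *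
      ∫ η in Ioo (-π) π, (2 * g x - g (x - η) - g (x + η)) / Real.sin (η / 2) ^ 2) := by
  set W : ℝ → ℝ := fun η => (2 * g x - g (x - η) - g (x + η)) / Real.sin (η / 2) ^ 2 with hW
  set F : ℝ → ℝ := fun η => (g x - g (x - η)) / Real.sin (η / 2) ^ 2 with hF
  set S : ℝ → Set ℝ := fun ε => {η : ℝ | ε < |η| ∧ |η| < π} with hS
  have hWm : Measurable W := by
    apply Measurable.div
    · exact ((continuous_const.sub (hgc.comp (continuous_const.sub continuous_id))).sub
        (hgc.comp (continuous_const.add continuous_id))).measurable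
    · exact ((Real.continuous_sin.comp (continuous_id.div_const 2)).pow 2).measurable
  have hFm : Measurable F := by
    apply Measurable.div
    · exact (continuous_const.sub (hgc.comp (continuous_const.sub continuous_id))).measurable
    · exact ((Real.continuous_sin.comp (continuous_id.div_const 2)).pow 2).measurable
  have hSm : ∀ ε, MeasurableSet (S ε) := by
    intro ε
    exact ((isOpen_lt continuous_const continuous_abs).inter
      (isOpen_lt continuous_abs continuous_const)).measurableSet
  have hSsub : ∀ ε, S ε ⊆ Ioo (-π) π := fun ε η hη => abs_lt.1 hη.2
  have hSsym : ∀ ε, ∀ η : ℝ, η ∈ S ε ↔ -η ∈ S ε := by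
    intro ε η; simp [hS, abs_neg]
  have hSvol : ∀ ε, volume (S ε) < ⊤ := fun ε =>
    lt_of_le_of_lt (measure_mono (hSsub ε)) (by simp [Real.volume_Ioo])
  -- pointwise F η + F (-η) = W η
  have hFW : ∀ η : ℝ, F η + F (-η) = W η := by
    intro η
    have hsin : Real.sin (-η / 2) ^ 2 = Real.sin (η / 2) ^ 2 := by
      rw [neg_div, Real.sin_neg, neg_sq]
    simp only [hF, hW, sub_neg_eq_add, hsin]
    rw [← add_div]
    ring_nf
  -- bound for F on S ε
  have hFb : ∀ ε, 0 < ε → ∀ η ∈ S ε, |F η| ≤ 2 * M * π ^ 2 / ε ^ 2 := by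
    intro ε hε η hη
    have hηπ : |η| ≤ π := (abs_lt.2 (hSsub ε hη)).le
    have h1 : η ^ 2 ≤ π ^ 2 * Real.sin (η / 2) ^ 2 := sq_le_pi_sq_sin_sq hηπ
    have h2 : ε ^ 2 < η ^ 2 := by
      have := hη.1
      nlinarith [abs_nonneg η, sq_abs η]
    have hsinsq : 0 < Real.sin (η / 2) ^ 2 := by nlinarith [sq_nonneg π, Real.pi_pos]
    rw [hF, abs_div, abs_of_nonneg hsinsq.le, div_le_div_iff₀ hsinsq (by positivity)]
    have h3 : |g x - g (x - η)| ≤ 2 * M := by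
      calc |g x - g (x - η)| ≤ |g x| + |g (x - η)| := abs_sub _ _
        _ ≤ 2 * M := by linarith [hMb x, hMb (x - η)]
    have h4 : ε ^ 2 ≤ π ^ 2 * Real.sin (η / 2) ^ 2 := by linarith
    nlinarith [abs_nonneg (g x - g (x - η)), sq_nonneg ε, hsinsq]
  -- the eventual equality
  have hkey : ∀ ε ∈ Ioi (0:ℝ), pvIntegralT g x ε = (1 / (8 * π)) * ∫ η in S ε, W η := by
    intro ε hε
    have hFint : IntegrableOn F (S ε) :=
      integrableOn_of_bdd (hSm ε) hFm (hSvol ε) (hFb ε hε)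
    have hFnegint : IntegrableOn (fun η => F (-η)) (S ε) := by
      refine integrableOn_of_bdd (C := 2 * M * π ^ 2 / ε ^ 2) (hSm ε) (hFm.comp measurable_neg) (hSvol ε) ?_
      intro η hη
      exact hFb ε hε (-η) ((hSsym ε η).1 hη)
    have hflip : ∫ η in S ε, F (-η) = ∫ η in S ε, F η := setIntegral_neg_symm (hSsym ε)
    have hsum : ∫ η in S ε, W η = (∫ η in S ε, F η) + ∫ η in S ε, F (-η) := by
      rw [← integral_add hFint hFnegint]
      exact setIntegral_congr_fun (hSm ε) fun η _ => (hFW η).symm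
    have h2 : ∫ η in S ε, W η = 2 * ∫ η in S ε, F η := by rw [hsum, hflip]; ring
    rw [pvIntegralT]
    have : ∫ η in S ε, F η = (∫ η in S ε, W η) / 2 := by rw [h2]; ring
    rw [show ∫ η in {η : ℝ | ε < |η| ∧ |η| < π}, (g x - g (x - η)) / Real.sin (η / 2) ^ 2
        = ∫ η in S ε, F η from rfl, this]
    ring
  -- dominated convergence
  have htend : Tendsto (fun ε => ∫ η in S ε, W η) (nhdsWithin 0 (Ioi 0))
      (nhds (∫ η in Ioo (-π) π, W η)) := by
    have hIoo : ∫ η in Ioo (-π) π, W η = ∫ η in Ioo (-π) π \ {0}, W η := by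
      refine (setIntegral_congr_set ?_).symm
      refine diff_ae_eq_self.2 ?_
      exact measure_mono_null inter_subset_right (by simp)
    rw [hIoo, ← integral_indicator (measurableSet_Ioo.diff (measurableSet_singleton 0))]
    have : ∀ ε, ∫ η in S ε, W η = ∫ η, (S ε).indicator W η := by
      intro ε; rw [integral_indicator (hSm ε)]
    simp_rw [this]
    refine tendsto_integral_filter_of_dominated_convergence
      (bound := (Ioo (-π) π).indicator (fun η => 2 * K * π ^ 2 * |η| ^ (a - 1)))
      (Eventually.of_forall fun ε => (hWm.indicator (hSm ε)).aestronglyMeasurable)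
      (Eventually.of_forall fun ε => Eventually.of_forall fun η => ?_)
      ((integrable_indicator_iff measurableSet_Ioo).2 hbint)
      ?_
    · by_cases hη : η ∈ S ε
      · rw [indicator_of_mem hη, indicator_of_mem (hSsub ε hη), Real.norm_eq_abs]
        exact hWb x η (abs_lt.2 (hSsub ε hη)).le
      · rw [indicator_of_notMem hη]
        simp only [norm_zero]
        refine indicator_nonneg (fun t _ => ?_) η
        have := Real.rpow_nonneg (abs_nonneg t) (a - 1)
        positivity
    · have h0 : ∀ᵐ η : ℝ, η ≠ 0 := by
        rw [ae_iff]; simp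
      filter_upwards [h0] with η hne
      by_cases hmem : |η| < π
      · have hmem' : η ∈ Ioo (-π) π \ {0} := ⟨abs_lt.1 hmem, by simpa using hne⟩
        rw [indicator_of_mem hmem']
        have hev : ∀ᶠ ε in nhdsWithin 0 (Ioi 0), (S ε).indicator W η = W η := by
          filter_upwards [Ioo_mem_nhdsGT_of_mem (α := ℝ)
            ⟨le_rfl, abs_pos.2 hne⟩] with ε hε
          exact indicator_of_mem (show η ∈ S ε from ⟨hε.2, hmem⟩) W
        exact Tendsto.congr' (hev.mono fun ε h => h.symm) tendsto_const_nhds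
      · have h1 : ∀ ε, (S ε).indicator W η = 0 := by
          intro ε
          exact indicator_of_notMem (fun hη => hmem hη.2) W
        have h2 : (Ioo (-π) π \ {0}).indicator W η = 0 := by
          refine indicator_of_notMem (fun hη => hmem (abs_lt.2 ⟨hη.1.1, hη.1.2⟩)) W
        simp_rw [h1, h2]
        exact tendsto_const_nhds
  refine Tendsto.congr' ?_ (htend.const_mul (1 / (8 * π)))
  filter_upwards [self_mem_nhdsWithin] with ε hε
  exact (hkey ε hε).symm

end
private noncomputable def Qf (g : ℝ → ℝ) (x y : ℝ) : ℝ :=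
  (g x - g y) ^ 2 * (g x + g y) /
    (Real.sin ((x - y) / 2) ^ 2 * (1 + g x ^ 2) * (1 + g y ^ 2))

private lemma pointwise_alg (g : ℝ → ℝ) (x η : ℝ) :
    ((1 / (1 + g x ^ 2)) * (g x - g (x + η))
      + (1 / (1 + g (x + η) ^ 2)) * (g (x + η) - g x)) / Real.sin (η / 2) ^ 2
    = - Qf g x (x + η) := by
  have hxy : ((x - (x + η)) / 2) = -(η / 2) := by ring
  rw [Qf, hxy, Real.sin_neg, neg_sq]
  rcases eq_or_ne (Real.sin (η / 2) ^ 2) 0 with hs | hs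
  · rw [hs]; simp
  · have h1 : (1:ℝ) + g x ^ 2 ≠ 0 := by positivity
    have h2 : (1:ℝ) + g (x + η) ^ 2 ≠ 0 := by positivity
    field_simp
    ring

private lemma inner_eq (g : ℝ → ℝ) (hgc : Continuous g)
    (hper : Function.Periodic g (2 * π)) (η : ℝ) :
    ∫ x in Ioc (-π) π,
        (1 / (1 + g x ^ 2)) * ((2 * g x - g (x - η) - g (x + η)) / Real.sin (η / 2) ^ 2)
      = - ∫ x in Ioc (-π) π, Qf g x (x + η) := by
  have hle : -π ≤ π := by linarith [Real.pi_pos]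
  have hφc : Continuous fun t : ℝ => 1 / (1 + g t ^ 2) :=
    continuous_const.div (continuous_const.add (hgc.pow 2)) (fun t => by positivity)
  have hc1 : IntervalIntegrable (fun x => (1 / (1 + g x ^ 2)) * (g x - g (x + η)))
      volume (-π) π :=
    (hφc.mul (hgc.sub (hgc.comp (continuous_id.add continuous_const)))).intervalIntegrable _ _
  have hc2 : IntervalIntegrable (fun x => (1 / (1 + g x ^ 2)) * (g x - g (x - η)))
      volume (-π) π :=
    (hφc.mul (hgc.sub (hgc.comp (continuous_id.sub continuous_const)))).intervalIntegrable _ _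
  have hc3 : IntervalIntegrable (fun x => (1 / (1 + g (x + η) ^ 2)) * (g (x + η) - g x))
      volume (-π) π :=
    ((hφc.comp (continuous_id.add continuous_const)).mul
      ((hgc.comp (continuous_id.add continuous_const)).sub hgc)).intervalIntegrable _ _
  have ha : ∫ x in Ioc (-π) π,
        (1 / (1 + g x ^ 2)) * ((2 * g x - g (x - η) - g (x + η)) / Real.sin (η / 2) ^ 2)
      = (∫ x in (-π)..π, (1 / (1 + g x ^ 2)) * (2 * g x - g (x - η) - g (x + η)))
          / Real.sin (η / 2) ^ 2 := by
    rw [intervalIntegral.integral_of_le hle, ← MeasureTheory.integral_div]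
    simp_rw [mul_div_assoc]
  have hsplit : ∫ x in (-π)..π, (1 / (1 + g x ^ 2)) * (2 * g x - g (x - η) - g (x + η))
      = (∫ x in (-π)..π, (1 / (1 + g x ^ 2)) * (g x - g (x + η)))
        + ∫ x in (-π)..π, (1 / (1 + g x ^ 2)) * (g x - g (x - η)) := by
    rw [← intervalIntegral.integral_add hc1 hc2]
    exact intervalIntegral.integral_congr fun x _ => by ring
  have hshift : ∫ x in (-π)..π, (1 / (1 + g x ^ 2)) * (g x - g (x - η))
      = ∫ x in (-π)..π, (1 / (1 + g (x + η) ^ 2)) * (g (x + η) - g x) := by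
    set Fn : ℝ → ℝ := fun t => (1 / (1 + g t ^ 2)) * (g t - g (t - η)) with hFn
    have hFnper : Function.Periodic Fn (2 * π) := by
      intro t
      simp only [hFn]
      have e3 : t + 2 * π - η = (t - η) + 2 * π := by ring
      rw [e3, hper t, hper (t - η)]
    have h0 := hFnper.intervalIntegral_add_eq (-π) (-π + η)
    have e1 : -π + 2 * π = π := by ring
    have e2 : -π + η + 2 * π = π + η := by ring
    rw [e1, e2] at h0
    have h3 := intervalIntegral.integral_comp_add_right (a := -π) (b := π) Fn η
    rw [show (∫ x in (-π)..π, (1 / (1 + g x ^ 2)) * (g x - g (x - η)))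
        = ∫ x in (-π)..π, Fn x from rfl, h0, ← h3]
    refine intervalIntegral.integral_congr fun x _ => ?_
    simp only [hFn, add_sub_cancel_right]
  have hcomb : (∫ x in (-π)..π, (1 / (1 + g x ^ 2)) * (g x - g (x + η)))
        + (∫ x in (-π)..π, (1 / (1 + g (x + η) ^ 2)) * (g (x + η) - g x))
      = ∫ x in (-π)..π, ((1 / (1 + g x ^ 2)) * (g x - g (x + η))
          + (1 / (1 + g (x + η) ^ 2)) * (g (x + η) - g x)) :=
    (intervalIntegral.integral_add hc1 hc3).symm
  rw [ha, hsplit, hshift, hcomb, ← intervalIntegral.integral_div]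
  rw [show (∫ x in (-π)..π, ((1 / (1 + g x ^ 2)) * (g x - g (x + η))
        + (1 / (1 + g (x + η) ^ 2)) * (g (x + η) - g x)) / Real.sin (η / 2) ^ 2)
      = ∫ x in (-π)..π, - Qf g x (x + η) from
    intervalIntegral.integral_congr fun x _ => pointwise_alg g x η]
  rw [intervalIntegral.integral_neg, intervalIntegral.integral_of_le hle]

private lemma integrableOn_of_bdd' {α : Type*} [MeasureSpace α] {f : α → ℝ} {s : Set α}
    (hs : MeasurableSet s) (hm : Measurable f) (hμ : volume s < ⊤) {C : ℝ}
    (hC : ∀ η ∈ s, |f η| ≤ C) : IntegrableOn f s := by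
  refine Integrable.mono' (g := fun _ => C) (integrableOn_const hμ.ne)
    hm.aestronglyMeasurable ?_
  rw [ae_restrict_iff' hs]
  exact Eventually.of_forall fun η hη => by simpa [Real.norm_eq_abs] using hC η hη

private lemma inner_x (g : ℝ → ℝ) (hper : Function.Periodic g (2 * π)) (x : ℝ) :
    ∫ η in Ioo (-π) π, Qf g x (x + η) = ∫ y in (-π)..π, Qf g x y := by
  have hle : -π ≤ π := by linarith [Real.pi_pos]
  rw [setIntegral_congr_set Ioo_ae_eq_Ioc, ← intervalIntegral.integral_of_le hle]
  simp_rw [add_comm x]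
  rw [intervalIntegral.integral_comp_add_right (fun y => Qf g x y) x]
  have hQper : Function.Periodic (fun y => Qf g x y) (2 * π) := by
    intro y
    simp only [Qf]
    rw [hper y]
    have e : (x - (y + 2 * π)) / 2 = (x - y) / 2 - π := by ring
    rw [e, Real.sin_sub_pi, neg_sq]
  have h0 := hQper.intervalIntegral_add_eq (-π + x) (-π)
  have e1 : -π + x + 2 * π = π + x := by ring
  have e2 : -π + 2 * π = π := by ring
  rw [e1, e2] at h0
  exact h0

private lemma main_identity (g : ℝ → ℝ) (a K C : ℝ) (hgc : Continuous g)
    (hper : Function.Periodic g (2 * π))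
    (hWb : ∀ x η : ℝ, |η| ≤ π →
      |(2 * g x - g (x - η) - g (x + η)) / Real.sin (η / 2) ^ 2|
        ≤ 2 * K * π ^ 2 * |η| ^ (a - 1))
    (hbint : IntegrableOn (fun η : ℝ => 2 * K * π ^ 2 * |η| ^ (a - 1)) (Ioo (-π) π))
    (hQC : ∀ x y : ℝ, |Qf g x y| ≤ C) :
    (∫ x in (-π)..π, ((1 / (8 * π)) *
        ∫ η in Ioo (-π) π, (2 * g x - g (x - η) - g (x + η)) / Real.sin (η / 2) ^ 2)
          / (1 + g x ^ 2))
      = -(1 / (8 * π)) * ∫ x in (-π)..π, ∫ y in (-π)..π, Qf g x y := by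
  have hπ := Real.pi_pos
  have hle : -π ≤ π := by linarith
  have hIfin : volume (Ioc (-π) π) < ⊤ := by simp [Real.volume_Ioc]
  have hJfin : volume (Ioo (-π) π) < ⊤ := by simp [Real.volume_Ioo]
  -- measurability of the two product integrands
  have hnumc : Continuous (fun p : ℝ × ℝ => 2 * g p.1 - g (p.1 - p.2) - g (p.1 + p.2)) :=
    ((continuous_const.mul (hgc.comp continuous_fst)).sub
      (hgc.comp (continuous_fst.sub continuous_snd))).sub
      (hgc.comp (continuous_fst.add continuous_snd))
  have hdenc : Continuous (fun p : ℝ × ℝ => Real.sin (p.2 / 2) ^ 2) :=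
    (Real.continuous_sin.comp (continuous_snd.div_const 2)).pow 2
  have hφc : Continuous (fun t : ℝ => 1 / (1 + g t ^ 2)) :=
    continuous_const.div (continuous_const.add (hgc.pow 2)) (fun t => by positivity)
  have hWmp : Measurable (fun p : ℝ × ℝ => (1 / (1 + g p.1 ^ 2)) *
      ((2 * g p.1 - g (p.1 - p.2) - g (p.1 + p.2)) / Real.sin (p.2 / 2) ^ 2)) :=
    ((hφc.comp continuous_fst).measurable).mul (hnumc.measurable.div hdenc.measurable)
  have hQmp : Measurable (fun p : ℝ × ℝ => Qf g p.1 p.2) := by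
    unfold Qf
    exact ((((hgc.comp continuous_fst).sub (hgc.comp continuous_snd)).pow 2).mul
        ((hgc.comp continuous_fst).add (hgc.comp continuous_snd))).measurable.div
      ((((Real.continuous_sin.comp ((continuous_fst.sub continuous_snd).div_const 2)).pow 2).mul
        (continuous_const.add ((hgc.comp continuous_fst).pow 2))).mul
        (continuous_const.add ((hgc.comp continuous_snd).pow 2))).measurable
  -- step 0 : move 1/(1+g²) inside the inner integral
  have h0 : ∀ x : ℝ, ((1 / (8 * π)) *
        ∫ η in Ioo (-π) π, (2 * g x - g (x - η) - g (x + η)) / Real.sin (η / 2) ^ 2)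
          / (1 + g x ^ 2)
      = (1 / (8 * π)) * ∫ η in Ioo (-π) π, (1 / (1 + g x ^ 2)) *
          ((2 * g x - g (x - η) - g (x + η)) / Real.sin (η / 2) ^ 2) := by
    intro x
    rw [MeasureTheory.integral_const_mul]
    ring
  rw [intervalIntegral.integral_congr (fun x _ => h0 x), intervalIntegral.integral_of_le hle,
    MeasureTheory.integral_const_mul]
  -- Fubini 1
  have hint1 : Integrable (Function.uncurry fun x η => (1 / (1 + g x ^ 2)) *
      ((2 * g x - g (x - η) - g (x + η)) / Real.sin (η / 2) ^ 2))
      ((volume.restrict (Ioc (-π) π)).prod (volume.restrict (Ioo (-π) π))) := by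
    refine Integrable.mono' (g := fun p : ℝ × ℝ => (1 : ℝ) * (2 * K * π ^ 2 * |p.2| ^ (a - 1)))
      (Integrable.mul_prod (show IntegrableOn (fun _ : ℝ => (1:ℝ)) (Ioc (-π) π) from integrableOn_const hIfin.ne) hbint)
      hWmp.aestronglyMeasurable ?_
    rw [Measure.prod_restrict, ae_restrict_iff' (measurableSet_Ioc.prod measurableSet_Ioo)]
    refine Eventually.of_forall fun p hp => ?_
    have hp2 : |p.2| ≤ π := (abs_lt.2 hp.2).le
    have hφ1 : |1 / (1 + g p.1 ^ 2)| ≤ 1 := by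
      rw [abs_of_nonneg (by positivity), div_le_one (by positivity)]
      nlinarith [sq_nonneg (g p.1)]
    rw [Function.uncurry, Real.norm_eq_abs, abs_mul]
    exact le_trans (mul_le_mul hφ1 (hWb p.1 p.2 hp2) (abs_nonneg _) (by norm_num)) (by simp)
  rw [MeasureTheory.integral_integral_swap hint1]
  -- inner symmetrization identity
  rw [setIntegral_congr_fun measurableSet_Ioo
    (fun η _ => inner_eq g hgc hper η), MeasureTheory.integral_neg]
  -- Fubini 2
  have hint2 : Integrable (Function.uncurry fun η x => Qf g x (x + η))
      ((volume.restrict (Ioo (-π) π)).prod (volume.restrict (Ioc (-π) π))) := by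
    refine Integrable.mono' (g := fun _ => C) ?_ ?_ ?_
    · rw [Measure.prod_restrict]
      exact integrableOn_const (by
        rw [Measure.prod_prod]
        exact (ENNReal.mul_lt_top hJfin hIfin).ne)
    · exact (hQmp.comp ((measurable_snd).prodMk (measurable_snd.add measurable_fst))
        ).aestronglyMeasurable
    · exact Eventually.of_forall fun p => by
        simpa [Function.uncurry, Real.norm_eq_abs] using hQC p.2 (p.2 + p.1)
  rw [MeasureTheory.integral_integral_swap hint2]
  -- inner per-x: Ioo → full period
  rw [setIntegral_congr_fun measurableSet_Ioc (fun x _ => inner_x g hper x),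
    ← intervalIntegral.integral_of_le hle]
  ring

private lemma measurable_Qf (g : ℝ → ℝ) (hgc : Continuous g) :
    Measurable (fun p : ℝ × ℝ => Qf g p.1 p.2) := by
  unfold Qf
  exact ((((hgc.comp continuous_fst).sub (hgc.comp continuous_snd)).pow 2).mul
      ((hgc.comp continuous_fst).add (hgc.comp continuous_snd))).measurable.div
    ((((Real.continuous_sin.comp ((continuous_fst.sub continuous_snd).div_const 2)).pow 2).mul
      (continuous_const.add ((hgc.comp continuous_fst).pow 2))).mul
      (continuous_const.add ((hgc.comp continuous_snd).pow 2))).measurable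


/-- the periodic symmetrization identity
`∫ Λg/(1+g²) = −(1/8π) ∬ (g(x)−g(y))²(g(x)+g(y)) / (sin²((x−y)/2)(1+g(x)²)(1+g(y)²))`,
and its sign consequence for `g ≥ 0`. -/
theorem symmetrization_identity_periodic
    (g : ℝ → ℝ) (a K : ℝ) (ha : 0 < a) (ha1 : a ≤ 1)
    -- 2π-periodic, continuously differentiable
    (hper : ∀ x : ℝ, g (x + 2 * Real.pi) = g x)
    (hg : ContDiff ℝ 1 g)
    -- g' is a-Hölder continuous
    (hhold : ∀ x y : ℝ, |deriv g x - deriv g y| ≤ K * |x - y| ^ a) :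
    ∃ Λg : ℝ → ℝ,
      (∀ x : ℝ, HasPVLambdaT g x (Λg x)) ∧
      IntegrableOn (fun p : ℝ × ℝ =>
          (g p.1 - g p.2) ^ 2 * (g p.1 + g p.2) /
            (Real.sin ((p.1 - p.2) / 2) ^ 2 * (1 + g p.1 ^ 2) * (1 + g p.2 ^ 2)))
        (Icc (-Real.pi) Real.pi ×ˢ Icc (-Real.pi) Real.pi) ∧
      (∫ x in (-Real.pi)..Real.pi, Λg x / (1 + g x ^ 2))
        = -(1 / (8 * Real.pi)) *
            ∫ x in (-Real.pi)..Real.pi, ∫ y in (-Real.pi)..Real.pi,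
              (g x - g y) ^ 2 * (g x + g y) /
                (Real.sin ((x - y) / 2) ^ 2 * (1 + g x ^ 2) * (1 + g y ^ 2)) ∧
      ((∀ x : ℝ, 0 ≤ g x) → (∫ x in (-Real.pi)..Real.pi, Λg x / (1 + g x ^ 2)) ≤ 0) := by
  have hπ := Real.pi_pos
  have hle : -Real.pi ≤ Real.pi := by linarith
  have hgc : Continuous g := hg.continuous
  have hperP : Function.Periodic g (2 * Real.pi) := hper
  have hK : 0 ≤ K := by
    have h := hhold 0 1
    have h2 : |(0:ℝ) - 1| ^ a = 1 := by
      rw [show |(0:ℝ) - 1| = 1 by norm_num, Real.one_rpow]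
    rw [h2, mul_one] at h
    exact le_trans (abs_nonneg _) h
  have hdper : Function.Periodic (deriv g) (2 * Real.pi) := by
    intro t
    have hfun : (fun y => g (y + 2 * Real.pi)) = g := funext hper
    calc deriv g (t + 2 * Real.pi) = deriv (fun y => g (y + 2 * Real.pi)) t :=
          (deriv_comp_add_const (f := g) (a := 2 * Real.pi) t).symm
      _ = deriv g t := by rw [hfun]
  obtain ⟨M, hM, hMb⟩ := bdd_of_per hgc hperP
  obtain ⟨L, hL, hLb⟩ := bdd_of_per (hg.continuous_deriv le_rfl) hdper
  have hdiff : Differentiable ℝ g := hg.differentiable one_ne_zero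
  have hLip : ∀ x y : ℝ, |g x - g y| ≤ L * |x - y| := by
    intro x y
    have h := Convex.norm_image_sub_le_of_norm_deriv_le (𝕜 := ℝ) (f := g) (s := univ)
      (fun t _ => hdiff t) (fun t _ => by simpa [Real.norm_eq_abs] using hLb t)
      convex_univ (mem_univ y) (mem_univ x)
    simpa [Real.norm_eq_abs] using h
  have hcomp := comp_key g L hperP hLip hL
  have hDb := hDb_lemma g a K ha ha1 hK hg hhold
  have hWb := hWb_lemma g a K ha hK hDb
  have hbint : IntegrableOn (fun η : ℝ => 2 * K * Real.pi ^ 2 * |η| ^ (a - 1))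
      (Ioo (-Real.pi) Real.pi) :=
    (integrableOn_abs_rpow (by linarith)).const_mul _
  have hQC : ∀ x y : ℝ, |Qf g x y| ≤ L ^ 2 * Real.pi ^ 2 * (2 * M) := fun x y =>
    hQb_lemma g L M hperP hL hM hMb hcomp x y
  have hid := main_identity g a K (L ^ 2 * Real.pi ^ 2 * (2 * M)) hgc hperP hWb hbint hQC
  have hpos0 : (0:ℝ) ≤ 1 / (8 * Real.pi) := by positivity
  refine ⟨fun x => (1 / (8 * Real.pi)) *
      ∫ η in Ioo (-Real.pi) Real.pi, (2 * g x - g (x - η) - g (x + η)) / Real.sin (η / 2) ^ 2,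
    fun x => pv_lemma g a K hgc hK hM hMb hWb hbint x, ?_, hid, ?_⟩
  · refine integrableOn_of_bdd' (measurableSet_Icc.prod measurableSet_Icc)
      (measurable_Qf g hgc) ?_ (fun p _ => hQC p.1 p.2)
    rw [show (volume : Measure (ℝ × ℝ)) = (volume : Measure ℝ).prod volume from rfl,
      Measure.prod_prod]
    exact ENNReal.mul_lt_top (by simp [Real.volume_Icc]) (by simp [Real.volume_Icc])
  · intro hg0
    have hpos : 0 ≤ ∫ x in (-Real.pi)..Real.pi, ∫ y in (-Real.pi)..Real.pi,
        (g x - g y) ^ 2 * (g x + g y) /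
          (Real.sin ((x - y) / 2) ^ 2 * (1 + g x ^ 2) * (1 + g y ^ 2)) := by
      refine intervalIntegral.integral_nonneg hle fun x _ => ?_
      refine intervalIntegral.integral_nonneg hle fun y _ => ?_
      refine div_nonneg (mul_nonneg (sq_nonneg _) (by linarith [hg0 x, hg0 y])) (by positivity)
    calc (∫ x in (-Real.pi)..Real.pi,
          (fun x => (1 / (8 * Real.pi)) * ∫ η in Ioo (-Real.pi) Real.pi,
            (2 * g x - g (x - η) - g (x + η)) / Real.sin (η / 2) ^ 2) x / (1 + g x ^ 2))
        = -(1 / (8 * Real.pi)) *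
            ∫ x in (-Real.pi)..Real.pi, ∫ y in (-Real.pi)..Real.pi,
              (g x - g y) ^ 2 * (g x + g y) /
                (Real.sin ((x - y) / 2) ^ 2 * (1 + g x ^ 2) * (1 + g y ^ 2)) := hid
      _ ≤ 0 := by nlinarith
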